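/- In the Markovian user model, for any set of k distinct bidders, the efficiency of an assignment of these bidders to the k positions is maximized by ordering them in nonincreasing order of adjusted ecpm a_i = e_i/(1 − q_i): for every injective sequence (x_1, …, x_k), the sequence obtained by reordering the same bidders so that their adjusted ecpms are nonincreasing has efficiency at least as large. Consequently, in a most efficient assignment the placed ads may be taken sorted in decreasing order of adjusted ecpm. -/

import Mathlib

/-- Efficiency of an assignment `x` of bidders to `k` positions in the
Markovian user model: `Σ_j e (x j) · Π_{l < j} q (x l)`. -/
noncomputable def eff (n : ℕ) (e q : Fin n → ℝ) (k : ℕ) (x : Fin k → Fin n) : ℝ :=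
  ∑ j : Fin k, e (x j) * ∏ l ∈ Finset.univ.filter (fun l => l < j), q (x l)

lemma sum_split {M : Type*} [AddCommMonoid M] {k : ℕ} (i j : Fin k) (hij : i ≠ j)
    (h : Fin k → M) :
    ∑ t, h t = h i + h j + ∑ t ∈ (Finset.univ.erase i).erase j, h t := by
  rw [← Finset.add_sum_erase _ h (Finset.mem_univ i),
      ← Finset.add_sum_erase _ h (Finset.mem_erase.mpr ⟨hij.symm, Finset.mem_univ j⟩), add_assoc]

lemma prod_swap_inv {k : ℕ} (i j t : Fin k) (hij : (j : ℕ) = (i : ℕ) + 1) (ht : t ≠ j)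
    (w : Fin k → ℝ) :
    ∏ l ∈ Finset.univ.filter (fun l => l < t), w (Equiv.swap i j l)
      = ∏ l ∈ Finset.univ.filter (fun l => l < t), w l := by
  refine Finset.prod_equiv (Equiv.swap i j) (fun l => ?_) (fun l _ => rfl)
  simp only [Finset.mem_filter, Finset.mem_univ, true_and]
  have ht' : (t : ℕ) ≠ (j : ℕ) := fun h => ht (Fin.ext h)
  rcases eq_or_ne l i with rfl | hli
  · rw [Equiv.swap_apply_left, Fin.lt_def, Fin.lt_def]; omega
  rcases eq_or_ne l j with rfl | hlj
  · rw [Equiv.swap_apply_right, Fin.lt_def, Fin.lt_def]; omega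
  · rw [Equiv.swap_apply_of_ne_of_ne hli hlj]

lemma filter_lt_succ {k : ℕ} (i j : Fin k) (hij : (j : ℕ) = (i : ℕ) + 1) :
    Finset.univ.filter (fun l => l < j) = insert i (Finset.univ.filter (fun l => l < i)) := by
  ext l
  simp only [Finset.mem_filter, Finset.mem_univ, true_and, Finset.mem_insert, Fin.lt_def,
    Fin.ext_iff]
  omega

lemma eff_swap_le (n k : ℕ) (e q : Fin n → ℝ) (he : ∀ i, 0 ≤ e i)
    (hq0 : ∀ i, 0 ≤ q i) (hq1 : ∀ i, q i < 1)
    (z : Fin k → Fin n) (i j : Fin k) (hij : (j : ℕ) = (i : ℕ) + 1)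
    (ha : e (z i) / (1 - q (z i)) ≤ e (z j) / (1 - q (z j))) :
    eff n e q k z ≤ eff n e q k (z ∘ Equiv.swap i j) := by
  have hne : i ≠ j := by intro h; rw [h] at hij; omega
  set c := Equiv.swap i j with hc
  set z' := z ∘ c with hz'
  set f : Fin k → ℝ := fun t => e (z t) * ∏ l ∈ Finset.univ.filter (fun l => l < t), q (z l)
    with hf
  set F : Fin k → ℝ := fun t => e (z' t) * ∏ l ∈ Finset.univ.filter (fun l => l < t), q (z' l)
    with hF
  set P : ℝ := ∏ l ∈ Finset.univ.filter (fun l => l < i), q (z l) with hP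
  have hP0 : 0 ≤ P := Finset.prod_nonneg (fun l _ => hq0 _)
  have hci : c i = j := Equiv.swap_apply_left i j
  have hcj : c j = i := Equiv.swap_apply_right i j
  -- prefix products below i are unchanged
  have hPi : ∏ l ∈ Finset.univ.filter (fun l => l < i), q (z' l) = P := by
    rw [hP]; exact prod_swap_inv i j i hij hne (fun l => q (z l))
  have hinotmem : i ∉ Finset.univ.filter (fun l => l < i) := by simp
  -- the three groups of terms
  have hFci : F (c i) = e (z i) * (q (z j) * P) := by
    rw [hF]; simp only [hci]
    rw [filter_lt_succ i j hij, Finset.prod_insert hinotmem, hz']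
    simp only [Function.comp_apply, hci]
    rw [show (fun l => q (z (c l))) = (fun l => q (z l)) ∘ c from rfl] at *
    have := prod_swap_inv i j i hij hne (fun l => q (z l))
    simp only [Function.comp_apply] at this ⊢
    rw [this, hcj, ← hP]
  have hFcj : F (c j) = e (z j) * P := by
    rw [hF]; simp only [hcj]
    rw [hz']
    simp only [Function.comp_apply, hcj]
    have := prod_swap_inv i j i hij hne (fun l => q (z l))
    rw [this, hci, ← hP]
  have hfi : f i = e (z i) * P := rfl
  have hfj : f j = e (z j) * (q (z i) * P) := by
    rw [hf]; simp only
    rw [filter_lt_succ i j hij, Finset.prod_insert hinotmem]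
  have hrest : ∀ t ∈ (Finset.univ.erase i).erase j, F (c t) = f t := by
    intro t ht
    simp only [Finset.mem_erase, Finset.mem_univ, and_true] at ht
    obtain ⟨htj, hti⟩ := ht
    have hct : c t = t := Equiv.swap_apply_of_ne_of_ne hti htj
    rw [hF, hf]; simp only [hct, hz', Function.comp_apply, hct]
    rw [prod_swap_inv i j t hij htj (fun l => q (z l))]
  have heffz : eff n e q k z = f i + f j + ∑ t ∈ (Finset.univ.erase i).erase j, f t :=
    sum_split i j hne f
  have heffz' : eff n e q k z' = F (c i) + F (c j) + ∑ t ∈ (Finset.univ.erase i).erase j, F (c t) := by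
    have h1 : eff n e q k z' = ∑ t, F (c t) := (Equiv.sum_comp c F).symm
    rw [h1, sum_split i j hne (fun t => F (c t))]
  rw [heffz, heffz', Finset.sum_congr rfl hrest, hFci, hFcj, hfi, hfj]
  have h1i : 0 < 1 - q (z i) := by linarith [hq1 (z i)]
  have h1j : 0 < 1 - q (z j) := by linarith [hq1 (z j)]
  have key : e (z i) * (1 - q (z j)) ≤ e (z j) * (1 - q (z i)) := by
    rw [div_le_div_iff₀ h1i h1j] at ha; linarith
  nlinarith [mul_le_mul_of_nonneg_left key hP0]


lemma no_descent_id {k : ℕ} (σ : Equiv.Perm (Fin k))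
    (h : ∀ i : Fin k, ∀ hi : (i : ℕ) + 1 < k, (σ i : ℕ) ≤ (σ ⟨(i : ℕ) + 1, hi⟩ : ℕ)) :
    σ = 1 := by
  have mono : ∀ d : ℕ, ∀ a b : Fin k, (b : ℕ) = (a : ℕ) + d → (σ a : ℕ) ≤ (σ b : ℕ) := by
    intro d
    induction d with
    | zero =>
      intro a b hb
      have : a = b := Fin.ext (by omega)
      rw [this]
    | succ d ih =>
      intro a b hb
      have hd : (a : ℕ) + d < k := by omega
      have hbk : (b : ℕ) < k := b.isLt
      have h1 := ih a ⟨(a : ℕ) + d, hd⟩ rfl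
      have h2 := h ⟨(a : ℕ) + d, hd⟩ (by simp only [Fin.val_mk]; omega)
      have hb' : (⟨((⟨(a : ℕ) + d, hd⟩ : Fin k) : ℕ) + 1, by simp only [Fin.val_mk]; omega⟩ : Fin k) = b :=
        Fin.ext (by simp only [Fin.val_mk]; omega)
      rw [hb'] at h2
      omega
  have hm : Monotone σ := by
    intro a b hab
    rw [Fin.le_def]
    exact mono ((b : ℕ) - (a : ℕ)) a b (by rw [Fin.le_def] at hab; omega)
  have hsm : StrictMono σ := hm.strictMono_of_injective σ.injective
  have : (σ : Fin k → Fin k) = id :=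
    (StrictMono.range_inj hsm strictMono_id).mp (by rw [σ.surjective.range_eq, Set.range_id])
  exact Equiv.ext fun i => congrFun this i


lemma eff_perm_le (n k : ℕ) (e q : Fin n → ℝ) (he : ∀ i, 0 ≤ e i)
    (hq0 : ∀ i, 0 ≤ q i) (hq1 : ∀ i, q i < 1)
    (y : Fin k → Fin n) (hsort : Antitone (fun j => e (y j) / (1 - q (y j))))
    (σ : Equiv.Perm (Fin k)) :
    eff n e q k (y ∘ σ) ≤ eff n e q k y := by
  set m : Equiv.Perm (Fin k) → ℕ := fun τ => ∑ t : Fin k, (t : ℕ) * (τ t : ℕ) with hm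
  set K : ℕ := ∑ t : Fin k, (t : ℕ) * k with hK
  have key : ∀ N : ℕ, ∀ τ : Equiv.Perm (Fin k), K - m τ = N →
      eff n e q k (y ∘ τ) ≤ eff n e q k y := by
    intro N
    induction N using Nat.strong_induction_on with
    | _ N ih =>
      intro τ hτ
      by_cases hdesc : ∃ i : Fin k, ∃ hi : (i : ℕ) + 1 < k,
          ((τ ⟨(i : ℕ) + 1, hi⟩ : Fin k) : ℕ) < (τ i : ℕ)
      · obtain ⟨i, hi, hlt⟩ := hdesc
        set j : Fin k := ⟨(i : ℕ) + 1, hi⟩ with hj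
        have hij : (j : ℕ) = (i : ℕ) + 1 := rfl
        have hne : i ≠ j := fun h => by rw [h] at hij; omega
        set τ' : Equiv.Perm (Fin k) := τ * Equiv.swap i j with hτ'
        have hτ'i : τ' i = τ j := by
          rw [hτ', Equiv.Perm.mul_apply, Equiv.swap_apply_left]
        have hτ'j : τ' j = τ i := by
          rw [hτ', Equiv.Perm.mul_apply, Equiv.swap_apply_right]
        have hτ't : ∀ t ∈ (Finset.univ.erase i).erase j, τ' t = τ t := by
          intro t ht
          simp only [Finset.mem_erase, Finset.mem_univ, and_true] at ht
          rw [hτ', Equiv.Perm.mul_apply, Equiv.swap_apply_of_ne_of_ne ht.2 ht.1]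
        -- measure strictly increases
        have hmlt : m τ < m τ' := by
          simp only [hm]
          rw [sum_split i j hne (fun t => (t : ℕ) * ((τ t : Fin k) : ℕ)),
              sum_split i j hne (fun t => (t : ℕ) * ((τ' t : Fin k) : ℕ))]
          have hR : ∑ t ∈ (Finset.univ.erase i).erase j, (t : ℕ) * ((τ' t : Fin k) : ℕ)
              = ∑ t ∈ (Finset.univ.erase i).erase j, (t : ℕ) * ((τ t : Fin k) : ℕ) :=
            Finset.sum_congr rfl (fun t ht => by rw [hτ't t ht])
          rw [hR, hτ'i, hτ'j]
          have h1 : (j : ℕ) = (i : ℕ) + 1 := hij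
          nlinarith [hlt]
        have hmK : m τ < K := by
          rw [hm, hK]
          apply Finset.sum_lt_sum
          · intro t _
            exact Nat.mul_le_mul_left _ (le_of_lt (τ t).isLt)
          · exact ⟨j, Finset.mem_univ j, by
              have : (0 : ℕ) < (j : ℕ) := by rw [hij]; omega
              exact (Nat.mul_lt_mul_left this).mpr (τ j).isLt⟩
        have hmK' : m τ' ≤ K := by
          rw [hm, hK]
          exact Finset.sum_le_sum (fun t _ => Nat.mul_le_mul_left _ (le_of_lt (τ' t).isLt))
        have hstep : eff n e q k (y ∘ τ) ≤ eff n e q k (y ∘ τ') := by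
          have ha : e ((y ∘ τ) i) / (1 - q ((y ∘ τ) i))
              ≤ e ((y ∘ τ) j) / (1 - q ((y ∘ τ) j)) := by
            have := hsort (show τ j ≤ τ i from le_of_lt (by rw [Fin.lt_def]; exact hlt))
            simpa using this
          have heq : (y ∘ τ) ∘ Equiv.swap i j = y ∘ τ' := by
            funext t
            simp [hτ', Equiv.Perm.mul_apply]
          calc eff n e q k (y ∘ τ) ≤ eff n e q k ((y ∘ τ) ∘ Equiv.swap i j) :=
                eff_swap_le n k e q he hq0 hq1 (y ∘ τ) i j hij ha
            _ = eff n e q k (y ∘ τ') := by rw [heq]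
        exact le_trans hstep (ih (K - m τ') (by omega) τ' rfl)
      · push_neg at hdesc
        have : τ = 1 := no_descent_id τ (fun i hi => hdesc i hi)
        rw [this]
        simp
  exact key (K - m σ) σ rfl

/-- In the Markovian user model, for any fixed set of `k` distinct bidders,
sorting them in nonincreasing order of adjusted ecpm `a_i = e_i/(1 − q_i)`
maximizes efficiency: if `y` assigns the same bidders as `x` but sorted by
adjusted ecpm (nonincreasing), then `eff y ≥ eff x`. -/
theorem sorted_by_adjusted_ecpm_is_optimal (n k : ℕ) (hk : k ≤ n)
    (e q : Fin n → ℝ) (he : ∀ i, 0 ≤ e i)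
    (hq0 : ∀ i, 0 ≤ q i) (hq1 : ∀ i, q i < 1)
    (x y : Fin k → Fin n)
    (hx : Function.Injective x) (hy : Function.Injective y)
    (hrange : Set.range y = Set.range x)
    (hsort : Antitone (fun j => e (y j) / (1 - q (y j)))) :
    eff n e q k x ≤ eff n e q k y := by
  have hmem : ∀ i, x i ∈ Set.range y := by
    intro i; rw [hrange]; exact Set.mem_range_self i
  choose σf hσf using hmem
  have hinj : Function.Injective σf := by
    intro a b hab
    apply hx
    rw [← hσf a, ← hσf b, hab]
  have hbij : Function.Bijective σf := Finite.injective_iff_bijective.mp hinj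
  set σ : Equiv.Perm (Fin k) := Equiv.ofBijective σf hbij with hσ
  have hyx : y ∘ σ = x := funext fun i => hσf i
  calc eff n e q k x = eff n e q k (y ∘ σ) := by rw [hyx]
    _ ≤ eff n e q k y := eff_perm_le n k e q he hq0 hq1 y hsort σ
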